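/- There is an a.d.-family 𝒜 of subsets of ℕ of cardinality continuum such that the splitting partial order ℙ_𝒜 contains an antichain (a set of pairwise incompatible conditions) of cardinality continuum. -/

import Mathlib

open Set Filter Cardinal

noncomputable section

/-- The Banach space `ℓ∞` of bounded real sequences with the sup norm. -/
abbrev Linfty : Type := lp (fun _ : ℕ => ℝ) ⊤

/-- An a.d.-family: an uncountable family of infinite subsets of `ℕ` which is
pairwise almost disjoint. -/
def ADFamily (𝒜 : Set (Set ℕ)) : Prop :=
  ¬𝒜.Countable ∧ (∀ A ∈ 𝒜, A.Infinite) ∧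
    ∀ A ∈ 𝒜, ∀ B ∈ 𝒜, A ≠ B → (A ∩ B).Finite

/-- A maximal a.d.-family. -/
def MaximalADFamily (𝒜 : Set (Set ℕ)) : Prop :=
  ADFamily 𝒜 ∧ ∀ X : Set ℕ, X.Infinite → ∃ A ∈ 𝒜, (X ∩ A).Infinite

/-- `A =* B` : the symmetric difference is finite. -/
def eqStar (A B : Set ℕ) : Prop := (symmDiff A B).Finite

/-- Finite subfamilies `a`, `b` of `𝒜` represent the pair `p`. -/
def Represents (𝒜 : Set (Set ℕ)) (p : Set ℕ × Set ℕ) (a b : Finset (Set ℕ)) : Prop :=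
  ↑a ⊆ 𝒜 ∧ ↑b ⊆ 𝒜 ∧ eqStar p.1 (⋃ A ∈ a, A) ∧ eqStar p.2 (⋃ B ∈ b, B)

/-- `p` is a condition of the splitting partial order `ℙ_𝒜`. -/
def SplitCond (𝒜 : Set (Set ℕ)) (p : Set ℕ × Set ℕ) : Prop :=
  p.1 ∩ p.2 = ∅ ∧ ∃ a b : Finset (Set ℕ), Represents 𝒜 p a b

/-- `Extends p q` means `p ≤ q` in `ℙ_𝒜`. -/
def Extends (p q : Set ℕ × Set ℕ) : Prop := q.1 ⊆ p.1 ∧ q.2 ⊆ p.2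

/-- Compatibility in `ℙ_𝒜`. -/
def Compat (𝒜 : Set (Set ℕ)) (p q : Set ℕ × Set ℕ) : Prop :=
  ∃ r, SplitCond 𝒜 r ∧ Extends r p ∧ Extends r q

/-- An antichain of `ℙ_𝒜`: a set of pairwise incompatible conditions. -/
def SplitAntichain (𝒜 : Set (Set ℕ)) (P : Set (Set ℕ × Set ℕ)) : Prop :=
  (∀ p ∈ P, SplitCond 𝒜 p) ∧ ∀ p ∈ P, ∀ q ∈ P, p ≠ q → ¬Compat 𝒜 p q

/-- `ℙ_𝒜` satisfies the countable chain condition. -/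
def SplitCCC (𝒜 : Set (Set ℕ)) : Prop :=
  ∀ P : Set (Set ℕ × Set ℕ), SplitAntichain 𝒜 P → P.Countable

/-- A centered subset of `ℙ_𝒜`: every finite subset has a common lower bound in `ℙ_𝒜`. -/
def SplitCentered (𝒜 : Set (Set ℕ)) (P : Set (Set ℕ × Set ℕ)) : Prop :=
  ∀ F : Finset (Set ℕ × Set ℕ), ↑F ⊆ P →
    ∃ r, SplitCond 𝒜 r ∧ ∀ p ∈ F, Extends r p

/-- `ℙ_𝒜` is σ-centered. -/
def SplitSigmaCentered (𝒜 : Set (Set ℕ)) : Prop :=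
  ∃ P : ℕ → Set (Set ℕ × Set ℕ),
    (⋃ n, P n) = {p | SplitCond 𝒜 p} ∧ ∀ n, SplitCentered 𝒜 (P n)

/-- `ℙ_𝒜` has precaliber `κ`. -/
def SplitPrecaliber (𝒜 : Set (Set ℕ)) (κ : Cardinal) : Prop :=
  ∀ P : Set (Set ℕ × Set ℕ), (∀ p ∈ P, SplitCond 𝒜 p) → #P = κ →
    ∃ Q ⊆ P, #Q = κ ∧ SplitCentered 𝒜 Q

/-- Two conditions are essentially distinct if their (uniquely determined)
representing finite subfamilies differ on both coordinates. -/
def EssDistinct (𝒜 : Set (Set ℕ)) (p q : Set ℕ × Set ℕ) : Prop :=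
  ∀ ap bp aq bq : Finset (Set ℕ), Represents 𝒜 p ap bp → Represents 𝒜 q aq bq →
    ap ≠ aq ∧ bp ≠ bq

/-- An antiramsey a.d.-family. -/
def Antiramsey (𝒜 : Set (Set ℕ)) : Prop :=
  ADFamily 𝒜 ∧
  ∀ P : Set (Set ℕ × Set ℕ), (∀ p ∈ P, SplitCond 𝒜 p) → ¬P.Countable →
    (∀ p ∈ P, ∀ q ∈ P, p ≠ q → EssDistinct 𝒜 p q) →
    (∃ p ∈ P, ∃ q ∈ P, p ≠ q ∧ Compat 𝒜 p q) ∧ (∃ p ∈ P, ∃ q ∈ P, ¬Compat 𝒜 p q)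

/-- The first uncountable ordinal. -/
def omega1 : Ordinal.{0} := (Cardinal.aleph 1).ord

/-- A Luzin family. -/
def IsLuzinFamily (𝒜 : Set (Set ℕ)) : Prop :=
  ADFamily 𝒜 ∧ ∃ A : Ordinal.{0} → Set ℕ,
    (∀ ξ < omega1, A ξ ∈ 𝒜) ∧
    (∀ B ∈ 𝒜, ∃ ξ < omega1, A ξ = B) ∧
    (∀ ξ < omega1, ∀ η < omega1, ξ ≠ η → A ξ ≠ A η) ∧
    ∀ η < omega1, ∀ m : ℕ, {ξ : Ordinal | ξ < η ∧ sSup (A ξ ∩ A η) = m}.Finite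

/-- `(B i : i < n)` forms an `n`-Luzin gap. -/
def IsNLuzinGap (n : ℕ) (B : Fin n → Ordinal.{0} → Set ℕ) : Prop :=
  (∀ i : Fin n, ∀ α < omega1, ∀ β < omega1, α ≠ β → B i α ≠ B i β) ∧
  (∀ i j : Fin n, i ≠ j → ∀ α < omega1, ∀ β < omega1, B i α ≠ B j β) ∧
  ∃ m : ℕ,
    (∀ i j : Fin n, i < j → ∀ α < omega1, B i α ∩ B j α ⊆ Set.Iio m) ∧
    (∀ α < omega1, ∀ β < omega1, α ≠ β →
      ¬(⋃ (i : Fin n) (j : Fin n) (_ : i ≠ j), B i α ∩ B j β) ⊆ Set.Iio m)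

/-- `𝒜` contains an `n`-Luzin gap. -/
def ContainsNLuzinGap (𝒜 : Set (Set ℕ)) (n : ℕ) : Prop :=
  ∃ B : Fin n → Ordinal.{0} → Set ℕ,
    (∀ i : Fin n, ∀ α < omega1, B i α ∈ 𝒜) ∧ IsNLuzinGap n B

-- The characteristic function of `A ⊆ ℕ` as an element of `ℓ∞`.
open Classical in
def indicatorLinfty (A : Set ℕ) : Linfty :=
  ⟨fun n => if n ∈ A then (1 : ℝ) else 0, by
    apply memℓp_infty
    refine ⟨1, ?_⟩
    rintro x ⟨n, rfl⟩
    dsimp only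
    split <;> simp⟩

/-- The subset `c₀` of `ℓ∞`. -/
def c0Set : Set Linfty := {f | Tendsto (fun n => f n) atTop (nhds 0)}

/-- The Johnson–Lindenstrauss space `X_𝒜`: the closed linear span of
`c₀ ∪ {1_A : A ∈ 𝒜}` in `ℓ∞`, as a (closed) submodule. -/
def XA (𝒜 : Set (Set ℕ)) : Submodule ℝ Linfty :=
  (Submodule.span ℝ (c0Set ∪ indicatorLinfty '' 𝒜)).topologicalClosure

/-- The norm `‖·‖_{∞,2}` on `ℓ∞`. -/
def norm12 (f : Linfty) : ℝ :=
  ‖f‖ + Real.sqrt (∑' n : ℕ, (f n) ^ 2 / 2 ^ (n + 1))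

/-- The unit sphere of `(X_𝒜, ‖·‖∞)`. -/
def sphereInf (𝒜 : Set (Set ℕ)) : Set Linfty :=
  {f : Linfty | f ∈ XA 𝒜 ∧ ‖f‖ = 1}

/-- The unit sphere of `(X_𝒜, ‖·‖_{∞,2})`. -/
def sphere12 (𝒜 : Set (Set ℕ)) : Set Linfty :=
  {f : Linfty | f ∈ XA 𝒜 ∧ norm12 f = 1}

/-- The Open Coloring Axiom. -/
def OCA : Prop :=
  ∀ (X : Type) [MetricSpace X], TopologicalSpace.SeparableSpace X →
    ∀ K : Set (X × X), IsOpen K → (∀ x y : X, (x, y) ∈ K → (y, x) ∈ K) →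
      (∃ Y : Set X, ¬Y.Countable ∧ ∀ x ∈ Y, ∀ y ∈ Y, x ≠ y → (x, y) ∈ K) ∨
      (∃ C : ℕ → Set X, (⋃ n, C n) = Set.univ ∧
        ∀ n, ∀ x ∈ C n, ∀ y ∈ C n, x ≠ y → (x, y) ∉ K)

/-- An `ℝ`-embeddable a.d.-family. -/
def REmbeddable (𝒜 : Set (Set ℕ)) : Prop :=
  ∃ (f : ℕ → ℚ) (r : Set ℕ → ℝ), Function.Injective f ∧
    (∀ A ∈ 𝒜, Irrational (r A) ∧
      ∀ ε : ℝ, 0 < ε → {n ∈ A | ε ≤ |(f n : ℝ) - r A|}.Finite) ∧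
    (∀ A ∈ 𝒜, ∀ B ∈ 𝒜, A ≠ B → r A ≠ r B)

/-- The Continuum Hypothesis. -/
def CH : Prop := (Cardinal.continuum : Cardinal.{0}) = Cardinal.aleph 1

end


noncomputable section Statement9Aux

/-- `⌊2^n x⌋₊`. -/
private def mfl (x : ℝ) (n : ℕ) : ℕ := ⌊2 ^ n * x⌋₊

/-- Code of the `n`-th dyadic approximation (shifted by `c`). -/
private def FF (x : ℝ) (c : ℕ) (n : ℕ) : ℕ := Nat.pair n (mfl x n + c)

private lemma FF_inj (x : ℝ) (c : ℕ) : Function.Injective (FF x c) := by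
  intro a b h
  exact (Nat.pair_eq_pair.mp h).1

private lemma FF_range_infinite (x : ℝ) (c : ℕ) : (Set.range (FF x c)).Infinite :=
  Set.infinite_range_of_injective (FF_inj x c)

private lemma sep_lemma {x y : ℝ} (hx : 0 < x) (hxy : x < y) :
    ∃ N : ℕ, ∀ n ≥ N, mfl x n + 2 ≤ mfl y n := by
  obtain ⟨N, hN⟩ := pow_unbounded_of_one_lt (2 / (y - x)) (by norm_num : (1:ℝ) < 2)
  refine ⟨N, fun n hn => ?_⟩
  have hyx : (0:ℝ) < y - x := by linarith
  rw [div_lt_iff₀ hyx] at hN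
  have hpow : (2:ℝ) ^ N ≤ 2 ^ n := pow_le_pow_right₀ (by norm_num) hn
  have h2 : 2 ^ n * x + 2 ≤ 2 ^ n * y := by nlinarith
  have h0 : (0:ℝ) ≤ 2 ^ n * x := by positivity
  show ⌊2 ^ n * x⌋₊ + 2 ≤ ⌊2 ^ n * y⌋₊
  have e : ⌊2 ^ n * x⌋₊ + 2 = ⌊2 ^ n * x + (2:ℕ)⌋₊ := (Nat.floor_add_natCast h0 2).symm
  rw [e]
  apply Nat.floor_le_floor
  push_cast
  linarith

private lemma inter_fin' {x y : ℝ} (hx : 0 < x) (hxy : x < y) {c d : ℕ}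
    (hc : c ≤ 1) (hd : d ≤ 1) :
    (Set.range (FF x c) ∩ Set.range (FF y d)).Finite := by
  obtain ⟨N, hN⟩ := sep_lemma hx hxy
  apply Set.Finite.subset ((Set.finite_Iio N).image (FF x c))
  rintro k ⟨⟨n, rfl⟩, ⟨n', hk⟩⟩
  obtain ⟨hn, hval⟩ := Nat.pair_eq_pair.mp hk
  refine ⟨n, ?_, rfl⟩
  by_contra h
  have hNn : N ≤ n := le_of_not_gt h
  have := hN n hNn
  subst hn
  omega

private lemma inter_fin {x y : ℝ} (hx : 0 < x) (hy : 0 < y) (hxy : x ≠ y) {c d : ℕ}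
    (hc : c ≤ 1) (hd : d ≤ 1) :
    (Set.range (FF x c) ∩ Set.range (FF y d)).Finite := by
  rcases hxy.lt_or_gt with h | h
  · exact inter_fin' hx h hc hd
  · rw [Set.inter_comm]
    exact inter_fin' hy h hd hc

private lemma range_ne {x y : ℝ} (hx : 0 < x) (hy : 0 < y) {c d : ℕ}
    (hc : c ≤ 1) (hd : d ≤ 1) (h : x ≠ y ∨ c ≠ d) :
    Set.range (FF x c) ≠ Set.range (FF y d) := by
  by_cases hxy : x = y
  · subst hxy
    have hcd : c ≠ d := h.resolve_left (fun hh => hh rfl)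
    intro he
    have : FF x c 0 ∈ Set.range (FF x d) := he ▸ Set.mem_range_self 0
    obtain ⟨n, hn⟩ := this
    obtain ⟨h1, h2⟩ := Nat.pair_eq_pair.mp hn
    subst h1
    omega
  · intro he
    have hfin := inter_fin hx hy hxy hc hd
    rw [he, Set.inter_self] at hfin
    exact FF_range_infinite y d hfin

private lemma key_fin {x y : ℝ} (hx : 0 < x) (hy : 0 < y) {c d : ℕ}
    (hc : c ≤ 1) (hd : d ≤ 1)
    (hne : Set.range (FF x c) ≠ Set.range (FF y d)) :
    (Set.range (FF x c) ∩ Set.range (FF y d)).Finite := by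
  by_cases h : x = y
  · subst h
    apply Set.Finite.subset Set.finite_empty
    rintro k ⟨⟨n, rfl⟩, ⟨n', hk⟩⟩
    obtain ⟨h1, h2⟩ := Nat.pair_eq_pair.mp hk
    subst h1
    have hcd : c ≠ d := fun hh => hne (by rw [hh])
    omega
  · exact inter_fin hx hy h hc hd

private lemma double_floor {a : ℝ} (ha : 0 ≤ a) :
    ⌊2 * a⌋₊ = 2 * ⌊a⌋₊ ∨ ⌊2 * a⌋₊ = 2 * ⌊a⌋₊ + 1 := by
  have h1 : (↑(2 * ⌊a⌋₊) : ℝ) ≤ 2 * a := by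
    push_cast
    have := Nat.floor_le ha
    linarith
  have hle : 2 * ⌊a⌋₊ ≤ ⌊2 * a⌋₊ := Nat.le_floor h1
  have hlt : ⌊2 * a⌋₊ < 2 * ⌊a⌋₊ + 2 := by
    have h3 : ⌊2 * a⌋₊ < 2 * ⌊a⌋₊ + 2 ↔ _ := Nat.floor_lt (by linarith)
    rw [h3]
    push_cast
    have := Nat.lt_floor_add_one a
    linarith
  omega

private lemma firstdiff {x y : ℝ} (hx : x ∈ Set.Ioo (0:ℝ) 1) (hy : y ∈ Set.Ioo (0:ℝ) 1)
    (hxy : x < y) : ∃ n, mfl y n = mfl x n + 1 := by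
  have hxpos := hx.1
  have hypos := hy.1
  have hmono : ∀ n, mfl x n ≤ mfl y n := fun n =>
    Nat.floor_le_floor (by nlinarith [pow_pos (by norm_num : (0:ℝ) < 2) n] : 2 ^ n * x ≤ 2 ^ n * y)
  have hexists : ∃ n, mfl x n ≠ mfl y n := by
    obtain ⟨N, hN⟩ := sep_lemma hx.1 hxy
    exact ⟨N, by have := hN N le_rfl; omega⟩
  have hn : mfl x (Nat.find hexists) ≠ mfl y (Nat.find hexists) := Nat.find_spec hexists
  have hn0 : Nat.find hexists ≠ 0 := by
    intro h
    apply hn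
    rw [h]
    have e1 : mfl x 0 = 0 := Nat.floor_eq_zero.mpr (by simpa [mfl] using hx.2)
    have e2 : mfl y 0 = 0 := Nat.floor_eq_zero.mpr (by simpa [mfl] using hy.2)
    show mfl x 0 = mfl y 0
    rw [e1, e2]
  obtain ⟨k, hk⟩ := Nat.exists_eq_succ_of_ne_zero hn0
  have hkk : mfl x k = mfl y k := by
    by_contra hcon
    have hle : Nat.find hexists ≤ k := Nat.find_min' hexists hcon
    omega
  have hx2 : 2 ^ (k+1) * x = 2 * (2 ^ k * x) := by ring
  have hy2 : 2 ^ (k+1) * y = 2 * (2 ^ k * y) := by ring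
  have hxk : (0:ℝ) ≤ 2 ^ k * x := by positivity
  have hyk : (0:ℝ) ≤ 2 ^ k * y := by positivity
  have dx : mfl x (k+1) = 2 * mfl x k ∨ mfl x (k+1) = 2 * mfl x k + 1 := by
    have := double_floor hxk
    rw [← hx2] at this
    exact this
  have dy : mfl y (k+1) = 2 * mfl y k ∨ mfl y (k+1) = 2 * mfl y k + 1 := by
    have := double_floor hyk
    rw [← hy2] at this
    exact this
  have h1 := hmono (k + 1)
  rw [hk] at hn
  simp only [Nat.succ_eq_add_one] at hn
  exact ⟨k + 1, by omega⟩

/-- first coordinate of our conditions -/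
private def SA (x : ℝ) : Set ℕ := Set.range (FF x 0)
/-- second coordinate of our conditions -/
private def SB (x : ℝ) : Set ℕ := Set.range (FF x 1)

private def Aex : Set (Set ℕ) := (SA '' Set.Ioo 0 1) ∪ (SB '' Set.Ioo 0 1)

private lemma SA_SB_disj (x : ℝ) : SA x ∩ SB x = ∅ := by
  ext k
  simp only [Set.mem_inter_iff, Set.mem_empty_iff_false, iff_false, not_and]
  rintro ⟨n, rfl⟩ ⟨n', hk⟩
  obtain ⟨h1, h2⟩ := Nat.pair_eq_pair.mp hk
  subst h1
  omega

private lemma cross_nonempty {x y : ℝ} (hx : x ∈ Set.Ioo (0:ℝ) 1) (hy : y ∈ Set.Ioo (0:ℝ) 1)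
    (hxy : x < y) : (SA y ∩ SB x).Nonempty := by
  obtain ⟨n, hn⟩ := firstdiff hx hy hxy
  exact ⟨FF y 0 n, Set.mem_range_self n, ⟨n, by simp [FF, hn]⟩⟩

private lemma splitCond_pair {x : ℝ} (hx : x ∈ Set.Ioo (0:ℝ) 1) :
    SplitCond Aex (SA x, SB x) := by
  refine ⟨SA_SB_disj x, {SA x}, {SB x}, ?_, ?_, ?_, ?_⟩
  · intro A hA
    simp only [Finset.coe_singleton, Set.mem_singleton_iff] at hA
    exact hA ▸ Or.inl ⟨x, hx, rfl⟩
  · intro B hB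
    simp only [Finset.coe_singleton, Set.mem_singleton_iff] at hB
    exact hB ▸ Or.inr ⟨x, hx, rfl⟩
  · simp [eqStar]
  · simp [eqStar]

private lemma SA_injOn : Set.InjOn SA (Set.Ioo (0:ℝ) 1) := by
  intro x hx y hy h
  by_contra hxy
  exact range_ne hx.1 hy.1 (by norm_num) (by norm_num) (Or.inl hxy) h

private lemma pair_injOn : Set.InjOn (fun x : ℝ => (SA x, SB x)) (Set.Ioo 0 1) := by
  intro x hx y hy h
  exact SA_injOn hx hy (congrArg Prod.fst h)

private lemma mk_Aex : Cardinal.mk Aex = Cardinal.continuum := by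
  apply le_antisymm
  · apply (Cardinal.mk_union_le _ _).trans
    have h1 : Cardinal.mk (SA '' Set.Ioo (0:ℝ) 1) ≤ Cardinal.continuum :=
      (Cardinal.mk_image_le).trans_eq (Cardinal.mk_Ioo_real zero_lt_one)
    have h2 : Cardinal.mk (SB '' Set.Ioo (0:ℝ) 1) ≤ Cardinal.continuum :=
      (Cardinal.mk_image_le).trans_eq (Cardinal.mk_Ioo_real zero_lt_one)
    calc Cardinal.mk (SA '' Set.Ioo (0:ℝ) 1) + Cardinal.mk (SB '' Set.Ioo (0:ℝ) 1)
        ≤ Cardinal.continuum + Cardinal.continuum := add_le_add h1 h2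
      _ = Cardinal.continuum := Cardinal.add_eq_self Cardinal.aleph0_le_continuum
  · rw [← Cardinal.mk_Ioo_real (zero_lt_one : (0:ℝ) < 1),
      ← Cardinal.mk_image_eq_of_injOn _ _ SA_injOn]
    exact Cardinal.mk_le_mk_of_subset Set.subset_union_left

end Statement9Aux

/-- there is an a.d.-family of cardinality continuum whose splitting order
contains an antichain of cardinality continuum. -/
theorem statement9 :
    ∃ 𝒜 : Set (Set ℕ), ADFamily 𝒜 ∧ Cardinal.mk 𝒜 = Cardinal.continuum ∧
      ∃ P : Set (Set ℕ × Set ℕ), SplitAntichain 𝒜 P ∧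
        Cardinal.mk P = Cardinal.continuum := by
  classical
  refine ⟨Aex, ⟨?_, ?_, ?_⟩, mk_Aex, (fun x : ℝ => (SA x, SB x)) '' Set.Ioo 0 1, ⟨?_, ?_⟩, ?_⟩
  · intro hc
    have h1 : Cardinal.mk Aex ≤ Cardinal.aleph0 := hc.le_aleph0
    rw [mk_Aex] at h1
    exact absurd h1 (not_le.mpr Cardinal.aleph0_lt_continuum)
  · rintro A (⟨x, hx, rfl⟩ | ⟨x, hx, rfl⟩) <;> exact FF_range_infinite _ _
  · rintro A (⟨x, hx, rfl⟩ | ⟨x, hx, rfl⟩) B (⟨y, hy, rfl⟩ | ⟨y, hy, rfl⟩) hAB <;>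
      exact key_fin hx.1 hy.1 (by norm_num) (by norm_num) hAB
  · rintro p ⟨x, hx, rfl⟩
    exact splitCond_pair hx
  · rintro p ⟨x, hx, rfl⟩ q ⟨y, hy, rfl⟩ hpq ⟨r, ⟨hrdisj, -⟩, ⟨hr1, hr2⟩, ⟨hs1, hs2⟩⟩
    have hxy : x ≠ y := fun h => hpq (by rw [h])
    rcases hxy.lt_or_gt with h | h
    · obtain ⟨k, hk1, hk2⟩ := cross_nonempty hx hy h
      have hmem : k ∈ r.1 ∩ r.2 := ⟨hs1 hk1, hr2 hk2⟩
      rw [hrdisj] at hmem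
      exact hmem
    · obtain ⟨k, hk1, hk2⟩ := cross_nonempty hy hx h
      have hmem : k ∈ r.1 ∩ r.2 := ⟨hr1 hk1, hs2 hk2⟩
      rw [hrdisj] at hmem
      exact hmem
  · rw [Cardinal.mk_image_eq_of_injOn _ _ pair_injOn, Cardinal.mk_Ioo_real zero_lt_one]
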